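/- Let ε be a primitive Dirichlet character of conductor D with an L-function functional equation L(ε, 0) = (πi)^{-1} τ(ε) L(conj(ε), 1), valid when ε is odd (ε(-1) = -1). Formally: if ε is a primitive odd Dirichlet character of conductor D, then π i · L(ε, 0) = τ(ε) · L(conj(ε), 1). -/

import Mathlib

open Complex Finset

lemma aux_gammaR_two : Complex.Gammaℝ 2 = (Real.pi : ℂ)⁻¹ := by
  rw [Complex.Gammaℝ_def]
  norm_num [Complex.Gamma_one]
  rw [Complex.cpow_neg_one]

lemma aux_star_eq_inv {D : ℕ} [NeZero D] (ε : DirichletCharacter ℂ D) :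
    ε.ringHomComp (starRingEnd ℂ) = ε⁻¹ := by
  rw [← MulChar.star_eq_inv]; rfl

lemma aux_gauss_sum {D : ℕ} [NeZero D] (ε : DirichletCharacter ℂ D) :
    (∑ a : (ZMod D)ˣ, ε (a : ZMod D) *
        Complex.exp (2 * (Real.pi : ℂ) * Complex.I *
          (((a : ZMod D).val : ℕ) : ℂ) / (D : ℂ)))
      = gaussSum ε ZMod.stdAddChar := by
  have h : ∀ a : ZMod D, ZMod.stdAddChar a
      = Complex.exp (2 * (Real.pi : ℂ) * Complex.I * ((a.val : ℕ) : ℂ) / (D : ℂ)) := by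
    intro a
    rw [ZMod.stdAddChar_apply, ZMod.toCircle_apply]
  rw [gaussSum]
  simp_rw [← h]
  have himg := Finset.sum_image (s := (Finset.univ : Finset (ZMod D)ˣ))
    (f := fun a : ZMod D => ε a * ZMod.stdAddChar a)
    (g := fun u : (ZMod D)ˣ => (u : ZMod D)) (fun x _ y _ hxy => Units.val_inj.mp hxy)
  rw [← himg]
  refine Finset.sum_subset (Finset.subset_univ _) (fun x _ hx => ?_)
  have hxu : ¬ IsUnit x := by
    intro hu
    exact hx (Finset.mem_image.mpr ⟨hu.unit, Finset.mem_univ _, rfl⟩)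
  rw [ε.map_nonunit hxu, zero_mul]

/-- For a primitive odd Dirichlet character `ε` of conductor `D`:
`π i · L(ε, 0) = τ(ε) · L(conj ε, 1)`. -/
theorem stmt_9 (D : ℕ) [NeZero D] (ε : DirichletCharacter ℂ D)
    (hprim : ε.IsPrimitive) (hodd : ε (-1) = -1) :
    (Real.pi : ℂ) * Complex.I * DirichletCharacter.LFunction ε 0
      = (∑ a : (ZMod D)ˣ, ε (a : ZMod D) *
            Complex.exp (2 * (Real.pi : ℂ) * Complex.I *
              (((a : ZMod D).val : ℕ) : ℂ) / (D : ℂ))) *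
          DirichletCharacter.LFunction (ε.ringHomComp (starRingEnd ℂ)) 1 := by
  classical
  have hOdd : ε.Odd := hodd
  have hOddInv : ε⁻¹.Odd := by
    unfold DirichletCharacter.Odd
    rw [MulChar.inv_apply_eq_inv', hodd]
    norm_num
  have hD1 : D ≠ 1 ∨ True := Or.inr trivial
  -- functional equation at s = 1
  have hfe := hprim.completedLFunction_one_sub 1
  rw [sub_self] at hfe
  -- express completed L-functions via L-functions
  have hL0 : DirichletCharacter.LFunction ε 0
      = DirichletCharacter.completedLFunction ε 0 := by
    rcases eq_or_ne D 1 with rfl | hD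
    · -- mod 1 character cannot be odd: ε(-1) = ε(1) = 1 ≠ -1
      exfalso
      have : ε (-1) = 1 := by
        have : (-1 : ZMod 1) = 1 := Subsingleton.elim _ _
        rw [this, map_one]
      rw [this] at hodd
      norm_num at hodd
    · rw [DirichletCharacter.LFunction_eq_completed_div_gammaFactor ε 0 (Or.inr hD),
        hOdd.gammaFactor_def, zero_add, Complex.Gammaℝ_one, div_one]
  have hL1 : DirichletCharacter.completedLFunction ε⁻¹ 1
      = DirichletCharacter.LFunction ε⁻¹ 1 * (Real.pi : ℂ)⁻¹ := by
    rw [DirichletCharacter.LFunction_eq_completed_div_gammaFactor ε⁻¹ 1 (Or.inl one_ne_zero),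
      hOddInv.gammaFactor_def]
    have h2 : ((1:ℂ) + 1) = 2 := by norm_num
    rw [h2, aux_gammaR_two]
    have hπ : ((Real.pi : ℂ))⁻¹ ≠ 0 :=
      inv_ne_zero (Complex.ofReal_ne_zero.mpr Real.pi_ne_zero)
    rw [div_mul_cancel₀ _ hπ]
  -- root number for odd character
  have hroot : DirichletCharacter.rootNumber ε
      = gaussSum ε ZMod.stdAddChar / Complex.I / (D : ℂ) ^ (1/2 : ℂ) := by
    rw [DirichletCharacter.rootNumber, if_neg hOdd.not_even, pow_one]
  rw [hL0, hfe, hroot, hL1, aux_star_eq_inv, aux_gauss_sum]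
  have hDhalf : ((D : ℂ) ^ (1/2 : ℂ)) ≠ 0 := by
    rw [Ne, Complex.cpow_eq_zero_iff, not_and_or]
    exact Or.inl (by exact_mod_cast NeZero.ne D)
  have hπ : (Real.pi : ℂ) ≠ 0 := Complex.ofReal_ne_zero.mpr Real.pi_ne_zero
  have h12 : (1:ℂ) - 1/2 = 1/2 := by norm_num
  rw [h12]
  field_simp
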